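/- Let t ∈ {1,…,T} with P(D¹_t=0) > 0. Under No Anticipation and Homogeneous effects, the control group's mean realized outcome decomposes as E[Y_t | D¹_t=0] = E[Y_t(0,0) | D¹_t=0] + A²·P(D²_t=1 | D¹_t=0). -/

import Mathlib

/- Two-event staggered Difference-in-Differences setup (Callaway–Sant'Anna with a
confounding event).  Cohorts take values in `{2,…,T} ∪ {∞} ⊆ ℕ∞`; the potential-outcome
index `0 : ℕ∞` codes "never treated by that event". -/

open MeasureTheory ProbabilityTheory

noncomputable section

namespace TwoEventDiD

variable {Ω : Type*} [MeasurableSpace Ω]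

/-- Expectation of `Z` conditional on the event `A`: `E[Z | A]`. -/
def cE (μ : Measure Ω) (A : Set Ω) (Z : Ω → ℝ) : ℝ := ∫ ω, Z ω ∂(μ[|A])

/-- Probability of `B` conditional on the event `A`: `P(B | A)`. -/
def cP (μ : Measure Ω) (A B : Set Ω) : ℝ := (μ[|A] B).toReal

/-- `g` lies in `{2,…,T} ∪ {∞}`. -/
def InCohort (T : ℕ) (g : ℕ∞) : Prop := g = ⊤ ∨ ((2 : ℕ∞) ≤ g ∧ g ≤ (T : ℕ∞))

/-- Realized outcome `Y_t := Y_t(G¹,G²)`. -/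
def Yr (G1 G2 : Ω → ℕ∞) (Y : ℕ → ℕ∞ → ℕ∞ → Ω → ℝ) (t : ℕ) : Ω → ℝ :=
  fun ω => Y t (G1 ω) (G2 ω) ω

/-- Double-group-time average treatment effect
`ATT(g¹,g²,t) = E[Y_t(g¹,g²) − Y_t(0,0) | G¹=g¹, G²=g²]`. -/
def ATT (μ : Measure Ω) (G1 G2 : Ω → ℕ∞) (Y : ℕ → ℕ∞ → ℕ∞ → Ω → ℝ)
    (g1 g2 : ℕ∞) (t : ℕ) : ℝ :=
  cE μ {ω | G1 ω = g1 ∧ G2 ω = g2} fun ω => Y t g1 g2 ω - Y t 0 0 ω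

/-- Target (event-1) treatment effect
`ATT¹(g¹,g²,t) = E[Y_t(g¹,0) − Y_t(0,0) | G¹=g¹, G²=g²]`. -/
def ATT1 (μ : Measure Ω) (G1 G2 : Ω → ℕ∞) (Y : ℕ → ℕ∞ → ℕ∞ → Ω → ℝ)
    (g1 g2 : ℕ∞) (t : ℕ) : ℝ :=
  cE μ {ω | G1 ω = g1 ∧ G2 ω = g2} fun ω => Y t g1 0 ω - Y t 0 0 ω

/-- Confounding (event-2) treatment effect
`ATT²(g¹,g²,t) = E[Y_t(0,g²) − Y_t(0,0) | G¹=g¹, G²=g²]`. -/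
def ATT2 (μ : Measure Ω) (G1 G2 : Ω → ℕ∞) (Y : ℕ → ℕ∞ → ℕ∞ → Ω → ℝ)
    (g1 g2 : ℕ∞) (t : ℕ) : ℝ :=
  cE μ {ω | G1 ω = g1 ∧ G2 ω = g2} fun ω => Y t 0 g2 ω - Y t 0 0 ω

/-- No Anticipation (unconditional version): before `max(g¹,g²)` the mean outcome of
cohort `(g¹,g²)` coincides with the appropriate less-treated potential outcome. -/
def NoAnticipation (μ : Measure Ω) (G1 G2 : Ω → ℕ∞) (Y : ℕ → ℕ∞ → ℕ∞ → Ω → ℝ)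
    (T : ℕ) : Prop :=
  ∀ g1 g2 : ℕ∞, InCohort T g1 → InCohort T g2 →
    0 < μ {ω | G1 ω = g1 ∧ G2 ω = g2} →
    ∀ t : ℕ, 1 ≤ t → (t : ℕ∞) < max g1 g2 →
      ((t : ℕ∞) < min g1 g2 →
        cE μ {ω | G1 ω = g1 ∧ G2 ω = g2} (Y t g1 g2)
          = cE μ {ω | G1 ω = g1 ∧ G2 ω = g2} (Y t 0 0)) ∧
      (g1 ≤ (t : ℕ∞) ∧ (t : ℕ∞) < g2 →
        cE μ {ω | G1 ω = g1 ∧ G2 ω = g2} (Y t g1 g2)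
          = cE μ {ω | G1 ω = g1 ∧ G2 ω = g2} (Y t g1 0)) ∧
      (g2 ≤ (t : ℕ∞) ∧ (t : ℕ∞) < g1 →
        cE μ {ω | G1 ω = g1 ∧ G2 ω = g2} (Y t g1 g2)
          = cE μ {ω | G1 ω = g1 ∧ G2 ω = g2} (Y t 0 g2))

end TwoEventDiD

open TwoEventDiD

/-- decomposition of the control group's mean realized outcome. -/
theorem control_group_mean_decomposition
    {Ω : Type*} [MeasurableSpace Ω] (μ : Measure Ω) [IsProbabilityMeasure μ]
    (T : ℕ) (hT : 2 ≤ T)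
    (G1 G2 : Ω → ℕ∞) (Y : ℕ → ℕ∞ → ℕ∞ → Ω → ℝ)
    (hG1mem : ∀ ω, InCohort T (G1 ω)) (hG2mem : ∀ ω, InCohort T (G2 ω))
    (hmG1 : ∀ g : ℕ∞, MeasurableSet {ω | G1 ω = g})
    (hmG2 : ∀ g : ℕ∞, MeasurableSet {ω | G2 ω = g})
    (hYint : ∀ (t : ℕ) (g1 g2 : ℕ∞), Integrable (Y t g1 g2) μ)
    (hYtop1 : ∀ (t : ℕ) (g2 : ℕ∞), Y t ⊤ g2 = Y t 0 g2)
    (hYtop2 : ∀ (t : ℕ) (g1 : ℕ∞), Y t g1 ⊤ = Y t g1 0)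
    -- Homogeneous effects
    (A1 A2 A : ℝ)
    (hA1 : ∀ (g1 g2 : ℕ∞) (t : ℕ), InCohort T g1 → InCohort T g2 →
      0 < μ {ω | G1 ω = g1 ∧ G2 ω = g2} → g1 ≤ (t : ℕ∞) →
      ATT1 μ G1 G2 Y g1 g2 t = A1)
    (hA2 : ∀ (g1 g2 : ℕ∞) (t : ℕ), InCohort T g1 → InCohort T g2 →
      0 < μ {ω | G1 ω = g1 ∧ G2 ω = g2} → g2 ≤ (t : ℕ∞) →
      ATT2 μ G1 G2 Y g1 g2 t = A2)
    (hA : ∀ (g1 g2 : ℕ∞) (t : ℕ), InCohort T g1 → InCohort T g2 →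
      0 < μ {ω | G1 ω = g1 ∧ G2 ω = g2} → g1 ≤ (t : ℕ∞) → g2 ≤ (t : ℕ∞) →
      ATT μ G1 G2 Y g1 g2 t = A)
    -- No Anticipation
    (hNA : NoAnticipation μ G1 G2 Y T)
    -- the period `t ∈ {1,…,T}` with `P(D¹_t = 0) > 0`
    (t : ℕ) (ht1 : 1 ≤ t) (htT : t ≤ T)
    (hposC : 0 < μ {ω | ¬ G1 ω ≤ (t : ℕ∞)}) :
    cE μ {ω | ¬ G1 ω ≤ (t : ℕ∞)} (Yr G1 G2 Y t)
    = cE μ {ω | ¬ G1 ω ≤ (t : ℕ∞)} (Y t 0 0)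
      + A2 * cP μ {ω | ¬ G1 ω ≤ (t : ℕ∞)} {ω | G2 ω ≤ (t : ℕ∞)} := by
  classical
  -- abbreviations
  set C : Set Ω := {ω | ¬ G1 ω ≤ (t : ℕ∞)} with hCdef
  set B : Set Ω := {ω | G2 ω ≤ (t : ℕ∞)} with hBdef
  -- measurability of C and B
  have mC : MeasurableSet C := by
    have : C = ⋃ g ∈ {g : ℕ∞ | ¬ g ≤ (t : ℕ∞)}, {ω | G1 ω = g} := by
      ext ω; simp [hCdef]
    rw [this]
    exact MeasurableSet.biUnion (Set.to_countable _) fun g _ => hmG1 g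
  have mB : MeasurableSet B := by
    have : B = ⋃ g ∈ {g : ℕ∞ | g ≤ (t : ℕ∞)}, {ω | G2 ω = g} := by
      ext ω; simp [hBdef]
    rw [this]
    exact MeasurableSet.biUnion (Set.to_countable _) fun g _ => hmG2 g
  -- cE in terms of set integrals
  have cE_eq : ∀ (A : Set Ω) (Z : Ω → ℝ),
      cE μ A Z = ((μ A).toReal)⁻¹ * ∫ ω in A, Z ω ∂μ := by
    intro A Z
    rw [cE, ProbabilityTheory.cond, integral_smul_measure, smul_eq_mul, ENNReal.toReal_inv]
  -- the finset of possible cohort values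
  set S : Finset ℕ∞ := insert ⊤ ((Finset.Icc 2 T).image (Nat.cast : ℕ → ℕ∞)) with hSdef
  have memS : ∀ g : ℕ∞, InCohort T g → g ∈ S := by
    intro g hg
    rcases hg with hg | ⟨h2, hTle⟩
    · simp [hSdef, hg]
    · have hne : g ≠ ⊤ := by
        intro h; rw [h] at hTle; exact absurd hTle (by simp)
      lift g to ℕ using hne
      have h2' : 2 ≤ g := by exact_mod_cast h2
      have hT' : g ≤ T := by exact_mod_cast hTle
      rw [hSdef]
      exact Finset.mem_insert_of_mem
        (Finset.mem_image_of_mem (Nat.cast : ℕ → ℕ∞) (Finset.mem_Icc.mpr ⟨h2', hT'⟩))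
  -- the cells
  set s : ℕ∞ × ℕ∞ → Set Ω := fun p => {ω | G1 ω = p.1 ∧ G2 ω = p.2} ∩ C with hsdef
  have ms : ∀ p, MeasurableSet (s p) := fun p =>
    ((hmG1 p.1).inter (hmG2 p.2)).inter mC
  set P : Finset (ℕ∞ × ℕ∞) := S ×ˢ S with hPdef
  have hcover : C = ⋃ p ∈ P, s p := by
    ext ω
    constructor
    · intro hω
      exact Set.mem_iUnion₂.mpr ⟨(G1 ω, G2 ω),
        Finset.mem_product.mpr ⟨memS _ (hG1mem ω), memS _ (hG2mem ω)⟩, ⟨⟨rfl, rfl⟩, hω⟩⟩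
    · intro hω
      rcases Set.mem_iUnion₂.mp hω with ⟨p, _, hmem⟩
      exact hmem.2
  have hdisj : Set.Pairwise (↑P) (Function.onFun Disjoint s) := by
    intro p _ q _ hpq
    simp only [Function.onFun, Set.disjoint_left]
    intro ω hωp hωq
    exact hpq (Prod.ext (hωp.1.1.symm.trans hωq.1.1) (hωp.1.2.symm.trans hωq.1.2))
  -- on each cell the realized outcome coincides with a fixed potential outcome
  have hYrEq : ∀ p : ℕ∞ × ℕ∞, Set.EqOn (Y t p.1 p.2) (Yr G1 G2 Y t) (s p) := by
    intro p ω hω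
    simp only [Yr, hω.1.1, hω.1.2]
  have hIntYr : ∀ p ∈ P, IntegrableOn (Yr G1 G2 Y t) (s p) μ := fun p _ =>
    ((hYint t p.1 p.2).integrableOn).congr_fun (hYrEq p) (ms p)
  -- key per-cell identity
  have key : ∀ p : ℕ∞ × ℕ∞,
      ∫ ω in s p, Yr G1 G2 Y t ω ∂μ
        = ∫ ω in s p, Y t 0 0 ω ∂μ + A2 * (μ (s p ∩ B)).toReal := by
    intro p
    by_cases hzero : μ (s p) = 0
    · have h1 : μ.restrict (s p) = 0 := Measure.restrict_eq_zero.mpr hzero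
      have h2 : μ (s p ∩ B) = 0 :=
        measure_mono_null Set.inter_subset_left hzero
      simp [h1, h2]
    · have hpos : 0 < μ (s p) := lt_of_le_of_ne (zero_le : 0 ≤ μ (s p)) (Ne.symm hzero)
      -- p.1 cannot be ≤ t
      have hg1t : ¬ p.1 ≤ (t : ℕ∞) := by
        intro hle
        apply hzero
        have : s p = ∅ := by
          ext ω
          simp only [hsdef, Set.mem_inter_iff, Set.mem_setOf_eq, Set.mem_empty_iff_false,
            iff_false, hCdef, not_and]
          rintro ⟨h1, _⟩ h2
          exact h2 (h1 ▸ hle)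
        rw [this]; exact measure_empty
      have hscell : s p = {ω | G1 ω = p.1 ∧ G2 ω = p.2} := by
        ext ω
        simp only [hsdef, Set.mem_inter_iff, Set.mem_setOf_eq, hCdef, and_iff_left_iff_imp]
        intro h h2
        exact hg1t (h.1 ▸ h2)
      have hcellpos : 0 < μ {ω | G1 ω = p.1 ∧ G2 ω = p.2} := hscell ▸ hpos
      obtain ⟨ω0, hω0⟩ : {ω | G1 ω = p.1 ∧ G2 ω = p.2}.Nonempty :=
        MeasureTheory.nonempty_of_measure_ne_zero hcellpos.ne'
      have inc1 : InCohort T p.1 := hω0.1 ▸ hG1mem ω0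
      have inc2 : InCohort T p.2 := hω0.2 ▸ hG2mem ω0
      have mcell : MeasurableSet {ω | G1 ω = p.1 ∧ G2 ω = p.2} := (hmG1 p.1).inter (hmG2 p.2)
      have hne : ((μ {ω | G1 ω = p.1 ∧ G2 ω = p.2}).toReal)⁻¹ ≠ 0 :=
        inv_ne_zero (ENNReal.toReal_ne_zero.mpr ⟨hcellpos.ne', measure_ne_top μ _⟩)
      have cancel : ∀ Z W : Ω → ℝ,
          cE μ {ω | G1 ω = p.1 ∧ G2 ω = p.2} Z = cE μ {ω | G1 ω = p.1 ∧ G2 ω = p.2} W →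
          ∫ ω in {ω | G1 ω = p.1 ∧ G2 ω = p.2}, Z ω ∂μ
            = ∫ ω in {ω | G1 ω = p.1 ∧ G2 ω = p.2}, W ω ∂μ := by
        intro Z W hZW
        rw [cE_eq, cE_eq] at hZW
        exact mul_left_cancel₀ hne hZW
      have step0 : ∫ ω in s p, Yr G1 G2 Y t ω ∂μ
          = ∫ ω in {ω | G1 ω = p.1 ∧ G2 ω = p.2}, Y t p.1 p.2 ω ∂μ := by
        rw [hscell]
        refine setIntegral_congr_fun mcell (fun ω hω => ?_)
        have hmem : ω ∈ s p := by rw [hscell]; exact hω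
        exact (hYrEq p hmem).symm
      have htg1 : (t : ℕ∞) < p.1 := not_le.mp hg1t
      have hmax : (t : ℕ∞) < max p.1 p.2 := lt_max_of_lt_left htg1
      obtain ⟨hNA1, hNA2, hNA3⟩ := hNA p.1 p.2 inc1 inc2 hcellpos t ht1 hmax
      by_cases hg2 : p.2 ≤ (t : ℕ∞)
      · -- event 2 already happened
        have hEq : ∫ ω in {ω | G1 ω = p.1 ∧ G2 ω = p.2}, Y t p.1 p.2 ω ∂μ
            = ∫ ω in {ω | G1 ω = p.1 ∧ G2 ω = p.2}, Y t 0 p.2 ω ∂μ :=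
          cancel _ _ (hNA3 ⟨hg2, htg1⟩)
        have hATT2 := hA2 p.1 p.2 t inc1 inc2 hcellpos hg2
        rw [ATT2, cE_eq] at hATT2
        have hsub : ∫ ω in {ω | G1 ω = p.1 ∧ G2 ω = p.2}, (Y t 0 p.2 ω - Y t 0 0 ω) ∂μ
            = ∫ ω in {ω | G1 ω = p.1 ∧ G2 ω = p.2}, Y t 0 p.2 ω ∂μ
              - ∫ ω in {ω | G1 ω = p.1 ∧ G2 ω = p.2}, Y t 0 0 ω ∂μ :=
          integral_sub ((hYint t 0 p.2).integrableOn) ((hYint t 0 0).integrableOn)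
        rw [hsub] at hATT2
        have hB' : s p ∩ B = s p := by
          apply Set.inter_eq_left.mpr
          intro ω hω
          show G2 ω ≤ (t : ℕ∞)
          rw [hω.1.2]; exact hg2
        have hval : ∫ ω in {ω | G1 ω = p.1 ∧ G2 ω = p.2}, Y t 0 p.2 ω ∂μ
              - ∫ ω in {ω | G1 ω = p.1 ∧ G2 ω = p.2}, Y t 0 0 ω ∂μ
            = A2 * (μ {ω | G1 ω = p.1 ∧ G2 ω = p.2}).toReal := by
          have htne : (μ {ω | G1 ω = p.1 ∧ G2 ω = p.2}).toReal ≠ 0 :=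
            ENNReal.toReal_ne_zero.mpr ⟨hcellpos.ne', measure_ne_top μ _⟩
          field_simp at hATT2
          linarith [hATT2]
        rw [step0, hEq, hB', hscell]
        linarith [hval]
      · -- neither event happened yet
        have htg2 : (t : ℕ∞) < p.2 := not_le.mp hg2
        have hEq : ∫ ω in {ω | G1 ω = p.1 ∧ G2 ω = p.2}, Y t p.1 p.2 ω ∂μ
            = ∫ ω in {ω | G1 ω = p.1 ∧ G2 ω = p.2}, Y t 0 0 ω ∂μ :=
          cancel _ _ (hNA1 (lt_min htg1 htg2))
        have hB' : s p ∩ B = ∅ := by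
          ext ω
          simp only [Set.mem_inter_iff, Set.mem_empty_iff_false, iff_false, not_and]
          intro hω hωB
          exact hg2 (hω.1.2 ▸ hωB)
        rw [step0, hEq, hB', hscell]
        simp
  -- aggregate over cells
  have hsum1 : ∫ ω in C, Yr G1 G2 Y t ω ∂μ = ∑ p ∈ P, ∫ ω in s p, Yr G1 G2 Y t ω ∂μ := by
    conv_lhs => rw [hcover]
    exact integral_biUnion_finset P (fun p _ => ms p) hdisj hIntYr
  have hsum2 : ∫ ω in C, Y t 0 0 ω ∂μ = ∑ p ∈ P, ∫ ω in s p, Y t 0 0 ω ∂μ := by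
    conv_lhs => rw [hcover]
    exact integral_biUnion_finset P (fun p _ => ms p) hdisj
      (fun p _ => (hYint t 0 0).integrableOn)
  have hsum3 : μ (C ∩ B) = ∑ p ∈ P, μ (s p ∩ B) := by
    have hcov2 : C ∩ B = ⋃ p ∈ P, (s p ∩ B) := by
      rw [hcover, Set.iUnion₂_inter]
    rw [hcov2]
    refine measure_biUnion_finset ?_ (fun p _ => (ms p).inter mB)
    intro p hp q hq hpq
    exact Set.disjoint_of_subset Set.inter_subset_left Set.inter_subset_left
      (hdisj hp hq hpq)
  have hsum3' : (μ (C ∩ B)).toReal = ∑ p ∈ P, (μ (s p ∩ B)).toReal := by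
    rw [hsum3]
    exact ENNReal.toReal_sum (fun p _ => measure_ne_top μ _)
  have hmain : ∫ ω in C, Yr G1 G2 Y t ω ∂μ
      = ∫ ω in C, Y t 0 0 ω ∂μ + A2 * (μ (C ∩ B)).toReal := by
    rw [hsum1, hsum2, hsum3', Finset.mul_sum, ← Finset.sum_add_distrib]
    exact Finset.sum_congr rfl (fun p _ => key p)
  -- put things together
  rw [cE_eq, cE_eq, cP, ProbabilityTheory.cond_apply mC, hmain]
  rw [ENNReal.toReal_mul, ENNReal.toReal_inv]
  ring
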